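/- Let X be a finite set, π and π₀ probability mass functions on X with π(x), π₀(x) > 0 for all x, and r̃ : X → ℝ with |r̃(x)| ≤ b for all x. Define C₁ = ∑_x π₀(x) r̃(x) (1 - log π₀(x)) and C₂ = b · max_x ( π(x)/π₀(x) - 1 - log(π(x)/π₀(x)) ). Then |∑_x π(x) r̃(x) - ∑_x π₀(x) r̃(x) log π(x)| ≤ |C₁| + C₂. -/

import Mathlib

theorem stmt_5 {X : Type*} [Fintype X] [Nonempty X] (π π₀ rt : X → ℝ) (b : ℝ)
    (hπ : ∀ x, 0 < π x) (hπs : ∑ x, π x = 1)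
    (hπ₀ : ∀ x, 0 < π₀ x) (hπ₀s : ∑ x, π₀ x = 1)
    (hb : ∀ x, |rt x| ≤ b) :
    |(∑ x, π x * rt x) - ∑ x, π₀ x * rt x * Real.log (π x)| ≤
      |∑ x, π₀ x * rt x * (1 - Real.log (π₀ x))| +
        b * (Finset.univ.sup' Finset.univ_nonempty
          (fun x => π x / π₀ x - 1 - Real.log (π x / π₀ x))) := by
  classical
  set M := Finset.univ.sup' Finset.univ_nonempty
      (fun x => π x / π₀ x - 1 - Real.log (π x / π₀ x)) with hM
  have hb0 : 0 ≤ b := le_trans (abs_nonneg _) (hb (Classical.arbitrary X))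
  have hg : ∀ x, 0 ≤ π x / π₀ x - 1 - Real.log (π x / π₀ x) := by
    intro x
    have h := Real.log_le_sub_one_of_pos (div_pos (hπ x) (hπ₀ x))
    linarith
  have hgM : ∀ x : X, π x / π₀ x - 1 - Real.log (π x / π₀ x) ≤ M :=
    fun x => Finset.le_sup' (fun x => π x / π₀ x - 1 - Real.log (π x / π₀ x)) (Finset.mem_univ x)
  have key : (∑ x, π x * rt x) - ∑ x, π₀ x * rt x * Real.log (π x) =
      (∑ x, π₀ x * rt x * (1 - Real.log (π₀ x))) +
      ∑ x, π₀ x * rt x * (π x / π₀ x - 1 - Real.log (π x / π₀ x)) := by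
    rw [← Finset.sum_sub_distrib, ← Finset.sum_add_distrib]
    apply Finset.sum_congr rfl
    intro x _
    have hlog : Real.log (π x / π₀ x) = Real.log (π x) - Real.log (π₀ x) :=
      Real.log_div (ne_of_gt (hπ x)) (ne_of_gt (hπ₀ x))
    have h0 : π₀ x ≠ 0 := ne_of_gt (hπ₀ x)
    rw [hlog]
    field_simp
    ring
  rw [key]
  have h2 : |∑ x, π₀ x * rt x * (π x / π₀ x - 1 - Real.log (π x / π₀ x))| ≤ b * M := by
    calc |∑ x, π₀ x * rt x * (π x / π₀ x - 1 - Real.log (π x / π₀ x))|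
        ≤ ∑ x, |π₀ x * rt x * (π x / π₀ x - 1 - Real.log (π x / π₀ x))| :=
          Finset.abs_sum_le_sum_abs _ _
      _ ≤ ∑ x, π₀ x * (b * M) := by
          apply Finset.sum_le_sum
          intro x _
          rw [abs_mul, abs_mul, abs_of_pos (hπ₀ x), abs_of_nonneg (hg x), mul_assoc]
          refine mul_le_mul_of_nonneg_left ?_ (le_of_lt (hπ₀ x))
          exact mul_le_mul (hb x) (hgM x) (hg x) hb0
      _ = b * M := by rw [← Finset.sum_mul, hπ₀s, one_mul]
  calc |(∑ x, π₀ x * rt x * (1 - Real.log (π₀ x))) +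
      ∑ x, π₀ x * rt x * (π x / π₀ x - 1 - Real.log (π x / π₀ x))|
      ≤ |∑ x, π₀ x * rt x * (1 - Real.log (π₀ x))| +
        |∑ x, π₀ x * rt x * (π x / π₀ x - 1 - Real.log (π x / π₀ x))| := abs_add_le _ _
    _ ≤ _ := by exact add_le_add (le_refl _) h2
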